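/- Fix positive flows q_e > 0 on a finite nonempty edge set E, a constant C > 0, and an exponent 0 < γ < 1. Among all conductance assignments κ_e > 0 satisfying ∑_e κ_e^γ = C, the dissipation D(κ) = ∑_e q_e²/κ_e is minimized by κ_e = C^{1/γ} · q_e^{2/(γ+1)} / (∑_f q_f^{2γ/(γ+1)})^{1/γ}, and the minimum value of the dissipation equals (∑_e q_e^{2γ/(γ+1)})^{1+1/γ} / C^{1/γ}. -/

import Mathlib

open Finset in
/-- Murray's law: the dissipation-minimizing conductances under the material
constraint `∑ κ^γ = C`, and the minimal dissipation value. -/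
theorem murrays_law {E : Type*} [Fintype E] [Nonempty E]
    (q : E → ℝ) (hq : ∀ e, 0 < q e) (C γ : ℝ) (hC : 0 < C) (hγ0 : 0 < γ) (hγ1 : γ < 1)
    (κopt : E → ℝ)
    (hκopt : ∀ e, κopt e =
      C ^ (1/γ) * (q e) ^ (2/(γ+1)) / (∑ f : E, (q f) ^ (2*γ/(γ+1))) ^ (1/γ)) :
    (∀ e, 0 < κopt e) ∧ (∑ e : E, (κopt e) ^ γ = C) ∧
    (∀ κ : E → ℝ, (∀ e, 0 < κ e) → (∑ e : E, (κ e) ^ γ = C) →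
      ∑ e : E, (q e)^2 / κopt e ≤ ∑ e : E, (q e)^2 / κ e) ∧
    (∑ e : E, (q e)^2 / κopt e =
      (∑ e : E, (q e) ^ (2*γ/(γ+1))) ^ (1 + 1/γ) / C ^ (1/γ)) := by
  have hγ1' : 0 < γ + 1 := by linarith
  set S : ℝ := ∑ f : E, (q f) ^ (2*γ/(γ+1)) with hS
  have hSpos : 0 < S := Finset.sum_pos (fun f _ => Real.rpow_pos_of_pos (hq f) _)
    Finset.univ_nonempty
  have hCg : 0 < C ^ (1/γ) := Real.rpow_pos_of_pos hC _
  have hSg : 0 < S ^ (1/γ) := Real.rpow_pos_of_pos hSpos _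
  have hpos : ∀ e, 0 < κopt e := by
    intro e
    rw [hκopt e]
    exact div_pos (mul_pos hCg (Real.rpow_pos_of_pos (hq e) _)) hSg
  -- power computation: (κopt e)^γ = C * q e ^ (2γ/(γ+1)) / S
  have hpow : ∀ e, (κopt e) ^ γ = C * (q e) ^ (2*γ/(γ+1)) / S := by
    intro e
    rw [hκopt e, Real.div_rpow (mul_pos hCg (Real.rpow_pos_of_pos (hq e) _)).le hSg.le,
      Real.mul_rpow hCg.le (Real.rpow_pos_of_pos (hq e) _).le,
      ← Real.rpow_mul hC.le, ← Real.rpow_mul (hq e).le,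
      ← Real.rpow_mul hSpos.le, one_div, inv_mul_cancel₀ (ne_of_gt hγ0),
      Real.rpow_one, Real.rpow_one]
    congr 2
    field_simp
  have hconstraint : ∑ e : E, (κopt e) ^ γ = C := by
    simp only [hpow]
    rw [← Finset.sum_div, ← Finset.mul_sum, ← hS, mul_div_assoc,
      div_self (ne_of_gt hSpos), mul_one]
  -- value of dissipation at κopt
  have hterm : ∀ e, (q e)^2 / κopt e = S ^ (1/γ) / C ^ (1/γ) * (q e) ^ (2*γ/(γ+1)) := by
    intro e
    have key : (q e) ^ (2*γ/(γ+1)) = (q e)^2 / (q e) ^ (2/(γ+1)) := by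
      rw [← Real.rpow_natCast (q e) 2, ← Real.rpow_sub (hq e)]
      norm_num
      congr 1
      field_simp
      ring
    rw [hκopt e, key]
    have hqe2 : (q e) ^ (2/(γ+1)) ≠ 0 := ne_of_gt (Real.rpow_pos_of_pos (hq e) _)
    field_simp
  have hval : ∑ e : E, (q e)^2 / κopt e = S ^ (1 + 1/γ) / C ^ (1/γ) := by
    simp only [hterm]
    rw [← Finset.mul_sum, ← hS, Real.rpow_add hSpos, Real.rpow_one]
    field_simp
  refine ⟨hpos, hconstraint, ?_, hval⟩
  -- the minimality, via Hölder's inequality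
  intro κ hκ hκC
  rw [hval]
  set D : ℝ := ∑ e : E, (q e)^2 / κ e with hD
  have hDpos : 0 < D := Finset.sum_pos
    (fun e _ => div_pos (pow_pos (hq e) 2) (hκ e)) Finset.univ_nonempty
  have hconj : Real.HolderConjugate ((γ+1)/γ) (γ+1) := by
    rw [Real.holderConjugate_iff]
    constructor
    · rw [lt_div_iff₀ hγ0]; linarith
    · field_simp
  -- Hölder
  have holder := Real.inner_le_Lp_mul_Lq (Finset.univ : Finset E)
    (fun e => ((q e)^2 / κ e) ^ (γ/(γ+1))) (fun e => (κ e) ^ (γ/(γ+1))) hconj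
  have h1 : ∀ e : E, ((q e)^2 / κ e) ^ (γ/(γ+1)) * (κ e) ^ (γ/(γ+1))
      = (q e) ^ (2*γ/(γ+1)) := by
    intro e
    rw [← Real.mul_rpow (div_pos (pow_pos (hq e) 2) (hκ e)).le (hκ e).le,
      div_mul_cancel₀ _ (ne_of_gt (hκ e)), ← Real.rpow_natCast (q e) 2,
      ← Real.rpow_mul (hq e).le]
    norm_num
    congr 1
    ring
  have h2 : ∀ e : E, |((q e)^2 / κ e) ^ (γ/(γ+1))| ^ ((γ+1)/γ) = (q e)^2 / κ e := by
    intro e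
    have hx : 0 < (q e)^2 / κ e := div_pos (pow_pos (hq e) 2) (hκ e)
    rw [abs_of_pos (Real.rpow_pos_of_pos hx _), ← Real.rpow_mul hx.le]
    rw [div_mul_div_comm, mul_comm γ (γ+1), div_self (by positivity), Real.rpow_one]
  have h3 : ∀ e : E, |(κ e) ^ (γ/(γ+1))| ^ (γ+1) = (κ e) ^ γ := by
    intro e
    rw [abs_of_pos (Real.rpow_pos_of_pos (hκ e) _), ← Real.rpow_mul (hκ e).le,
      div_mul_cancel₀ _ (ne_of_gt hγ1')]
  simp only [h1, h2, h3] at holder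
  rw [hκC, ← hS] at holder
  -- holder : S ≤ D ^ (1/((γ+1)/γ)) * C ^ (1/(γ+1))
  have hexp : (1:ℝ)/((γ+1)/γ) = γ/(γ+1) := by field_simp
  rw [hexp] at holder
  -- raise both sides to power (γ+1)/γ
  have hfinal : S ^ ((γ+1)/γ) ≤ D * C ^ (1/γ) := by
    calc S ^ ((γ+1)/γ) ≤ (D ^ (γ/(γ+1)) * C ^ (1/(γ+1))) ^ ((γ+1)/γ) :=
          Real.rpow_le_rpow hSpos.le holder (by positivity)
      _ = D * C ^ (1/γ) := by
          rw [Real.mul_rpow (by positivity) (by positivity),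
            ← Real.rpow_mul hDpos.le, ← Real.rpow_mul hC.le,
            show γ/(γ+1) * ((γ+1)/γ) = 1 by field_simp,
            show 1/(γ+1) * ((γ+1)/γ) = 1/γ by field_simp,
            Real.rpow_one]
  have : S ^ (1 + 1/γ) = S ^ ((γ+1)/γ) := by
    congr 1
    field_simp
  rw [this, div_le_iff₀ hCg]
  exact hfinal
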